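/- Let K be a number field, Ē an adelically normed K-vector space of dimension N such that Ê is finite, with filtration by height F̃_t E := Span_K{x ∈ E : h_Ē(x) ≤ -t}, where h_Ē(x) = ∑_v ([K_v:Q_v]/[K:Q]) log ‖x‖_v. Then the sum of the jumping values satisfies ∑_{j=1}^N e_j(E, F̃) = - inf over all K-bases (x_1,...,x_N) of E of ∑_{j=1}^N h_Ē(x_j). -/

import Mathlib

open NumberField IsDedekindDomain

private lemma ereal_sum_ne_top {ι : Type*} (s : Finset ι) (f : ι → EReal)
    (hf : ∀ i ∈ s, f i ≠ ⊤) : ∑ i ∈ s, f i ≠ ⊤ := by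
  classical
  induction s using Finset.cons_induction with
  | empty => simp
  | cons a s ha ih =>
    rw [Finset.sum_cons]
    exact (EReal.add_lt_top (hf a (Finset.mem_cons_self a s))
      (ih fun i hi => hf i (Finset.mem_cons_of_mem hi))).ne

private lemma ereal_neg_sum {ι : Type*} (s : Finset ι) (f : ι → EReal)
    (hf : ∀ i ∈ s, f i ≠ ⊤) : -∑ i ∈ s, f i = ∑ i ∈ s, -f i := by
  classical
  induction s using Finset.cons_induction with
  | empty => simp
  | cons a s ha ih =>
    rw [Finset.sum_cons, Finset.sum_cons,
      EReal.neg_add (Or.inr (ereal_sum_ne_top s f fun i hi => hf i (Finset.mem_cons_of_mem hi)))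
        (Or.inl (hf a (Finset.mem_cons_self a s))), sub_eq_add_neg,
      ih fun i hi => hf i (Finset.mem_cons_of_mem hi)]

private lemma ereal_coe_sum {ι : Type*} (s : Finset ι) (f : ι → ℝ) :
    ((∑ i ∈ s, f i : ℝ) : EReal) = ∑ i ∈ s, (f i : EReal) :=
  map_sum (⟨⟨Real.toEReal, EReal.coe_zero⟩, EReal.coe_add⟩ : ℝ →+ EReal) f s

private lemma ereal_eq_top_of_forall_coe_le {a : EReal} (h : ∀ r : ℝ, (r : EReal) ≤ a) :
    a = ⊤ := by
  rw [EReal.eq_top_iff_forall_lt]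
  intro y
  exact lt_of_lt_of_le (by exact_mod_cast lt_add_one y) (h (y + 1))

private lemma ereal_eq_bot_of_forall_le_coe {a : EReal} (h : ∀ r : ℝ, a ≤ (r : EReal)) :
    a = ⊥ := by
  rw [EReal.eq_bot_iff_forall_lt]
  intro y
  exact lt_of_le_of_lt (h (y - 1)) (by exact_mod_cast sub_one_lt y)

private lemma ereal_le_coe_of_forall_add {a : EReal} {c : ℝ}
    (h : ∀ ε : ℝ, 0 < ε → a ≤ ((c + ε : ℝ) : EReal)) : a ≤ (c : EReal) := by
  by_contra hlt
  push_neg at hlt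
  obtain ⟨y, hy1, hy2⟩ := EReal.exists_between_coe_real hlt
  have hε : (0 : ℝ) < y - c := by exact_mod_cast sub_pos.mpr (EReal.coe_lt_coe_iff.mp hy1)
  have := h (y - c) hε
  rw [show c + (y - c) = y by ring] at this
  exact absurd (lt_of_le_of_lt this hy2) (lt_irrefl _)

private lemma ereal_coe_ennreal_eq (x : ENNReal) (hx : x ≠ ⊤) :
    (x : EReal) = ((x.toReal : ℝ) : EReal) := by
  have h1 : (x : EReal) ≠ ⊤ := fun hc => hx (EReal.coe_ennreal_eq_top_iff.mp hc)
  have h2 := EReal.coe_toReal h1 (EReal.coe_ennreal_ne_bot x)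
  rw [EReal.toReal_coe_ennreal] at h2
  exact h2.symm

private lemma sum_shift_Icc {M : Type*} [AddCommMonoid M] (g : ℕ → M) (N : ℕ) :
    ∑ i : Fin N, g (i.1 + 1) = ∑ j ∈ Finset.Icc 1 N, g j := by
  rw [Fin.sum_univ_eq_sum_range (fun i => g (i + 1)) N]
  induction N with
  | zero => simp
  | succ n ih =>
    rw [Finset.sum_range_succ, ih, ← Finset.insert_Icc_right_eq_Icc_add_one (by omega),
      Finset.sum_insert (by simp)]
    exact (add_comm _ _)

/-- Let `K` be a number field and `Ē` an adelically normed `K`-vector space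
of dimension `N` with finite set of small elements `Ê`. Define the height
`h(x) = (1/[K:ℚ]) ∑_v d_v log ‖x‖_v` (sum over all places, weighted by the local degrees
`d_v = [K_v : ℚ_v]`, with value in `ℝ ∪ {-∞}` computed from the positive and negative parts
of the series over the finite places) and the filtration by height
`F̃_t = span_K {x : h(x) ≤ -t}` with jumping values `e_j = sup {t : dim F̃_t ≥ j}`. Then
`∑_{j=1}^N e_j = - inf` over all `K`-bases `(x_1, …, x_N)` of `E` of `∑_j h(x_j)`. -/
theorem height_filtration_jumping_values_sum
    {K : Type*} [Field K] [NumberField K]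
    {E : Type*} [AddCommGroup E] [Module K E] [FiniteDimensional K E]
    (vabs : HeightOneSpectrum (𝓞 K) → AbsoluteValue K ℝ)
    (hnonarch : ∀ (v : HeightOneSpectrum (𝓞 K)) (a b : K),
      vabs v (a + b) ≤ max (vabs v a) (vabs v b))
    (hcompat : ∀ (v : HeightOneSpectrum (𝓞 K)) (c : K),
      vabs v c ≤ 1 ↔ v.valuation K c ≤ 1)
    -- the local degrees `d v = [K_v : ℚ_v]` at the finite places
    (d : HeightOneSpectrum (𝓞 K) → ℕ) (hd : ∀ v, 0 < d v)
    (nf : HeightOneSpectrum (𝓞 K) → E → ℝ)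
    (ni : InfinitePlace K → E → ℝ)
    (hnf0 : ∀ v (x : E), nf v x = 0 ↔ x = 0)
    (hnfs : ∀ v (c : K) (x : E), nf v (c • x) = vabs v c * nf v x)
    (hnfu : ∀ v (x y : E), nf v (x + y) ≤ max (nf v x) (nf v y))
    (hni0 : ∀ w (x : E), ni w x = 0 ↔ x = 0)
    (hninn : ∀ w (x : E), 0 ≤ ni w x)
    (hnis : ∀ w (c : K) (x : E), ni w (c • x) = w c * ni w x)
    (hnit : ∀ w (x y : E), ni w (x + y) ≤ ni w x + ni w y)
    (hlocfin : ∀ x : E, {v : HeightOneSpectrum (𝓞 K) | 1 < nf v x}.Finite)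
    -- the set of small elements is finite
    (hEhat : {x : E | (∀ v, nf v x ≤ 1) ∧ ∀ w, ni w x ≤ 1}.Finite)
    -- the height function, with values in `ℝ ∪ {±∞}`
    (h : E → EReal)
    (hheight : ∀ x : E, h x =
      (((Module.finrank ℚ K : ℝ)⁻¹ : ℝ) : EReal) *
        (((∑' v : HeightOneSpectrum (𝓞 K),
              ENNReal.ofReal ((d v : ℝ) * Real.log (nf v x)) : ENNReal) : EReal)
          - ((∑' v : HeightOneSpectrum (𝓞 K),
              ENNReal.ofReal (-((d v : ℝ) * Real.log (nf v x))) : ENNReal) : EReal)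
          + ((∑ w : InfinitePlace K, (w.mult : ℝ) * Real.log (ni w x) : ℝ) : EReal)))
    -- the filtration by height
    (F : ℝ → Submodule K E)
    (hF : ∀ t : ℝ, F t = Submodule.span K {x : E | h x ≤ ((-t : ℝ) : EReal)})
    -- its jumping values
    (e : ℕ → EReal)
    (he : ∀ j : ℕ,
      e j = sSup {s : EReal | ∃ t : ℝ, s = (t : EReal) ∧ j ≤ Module.finrank K (F t)}) :
    ∑ j ∈ Finset.Icc 1 (Module.finrank K E), e j
      = - sInf {s : EReal |
          ∃ b : Module.Basis (Fin (Module.finrank K E)) K E, s = ∑ j, h (b j)} := by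
  classical
  -- nonnegativity of the finite local norms
  have hnfnn : ∀ v (x : E), 0 ≤ nf v x := by
    intro v x
    have h0 : nf v (0 : E) = 0 := (hnf0 v 0).mpr rfl
    have hneg : nf v (-x) = nf v x := by
      rw [← neg_one_smul K x, hnfs, (vabs v).map_neg, (vabs v).map_one, one_mul]
    have hu := hnfu v x (-x)
    rw [add_neg_cancel, h0, hneg, max_self] at hu
    linarith
  -- the height is never `⊤`
  have hhne : ∀ x : E, h x ≠ ⊤ := by
    intro x
    have hA : (∑' v : HeightOneSpectrum (𝓞 K),
        ENNReal.ofReal ((d v : ℝ) * Real.log (nf v x))) ≠ ⊤ := by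
      have hz : ∀ v ∉ (hlocfin x).toFinset,
          ENNReal.ofReal ((d v : ℝ) * Real.log (nf v x)) = 0 := by
        intro v hv
        have h1 : nf v x ≤ 1 := not_lt.mp fun hh => hv ((hlocfin x).mem_toFinset.mpr hh)
        exact ENNReal.ofReal_eq_zero.mpr
          (mul_nonpos_of_nonneg_of_nonpos (Nat.cast_nonneg _) (Real.log_nonpos (hnfnn v x) h1))
      rw [tsum_eq_sum hz]
      exact (ENNReal.sum_lt_top.mpr fun v _ => ENNReal.ofReal_lt_top).ne
    rw [hheight x]
    have hcpos : (0 : ℝ) < (Module.finrank ℚ K : ℝ)⁻¹ := by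
      have : 0 < Module.finrank ℚ K := Module.finrank_pos
      positivity
    rcases eq_or_ne (∑' v : HeightOneSpectrum (𝓞 K),
        ENNReal.ofReal (-((d v : ℝ) * Real.log (nf v x)))) ⊤ with hBt | hBf
    · rw [hBt, EReal.coe_ennreal_top, EReal.sub_top, EReal.bot_add,
        EReal.coe_mul_bot_of_pos hcpos]
      exact bot_ne_top
    · rw [ereal_coe_ennreal_eq _ hA, ereal_coe_ennreal_eq _ hBf,
        ← EReal.coe_sub, ← EReal.coe_add, ← EReal.coe_mul]
      exact EReal.coe_ne_top _
  -- the height is either `⊥` or a real number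
  have hcases : ∀ x : E, h x = ⊥ ∨ ∃ r : ℝ, h x = (r : EReal) := by
    intro x
    by_cases hb : h x = ⊥
    · exact Or.inl hb
    · exact Or.inr ⟨(h x).toReal, (EReal.coe_toReal (hhne x) hb).symm⟩
  set N := Module.finrank K E with hNdef
  set S := {s : EReal | ∃ b : Module.Basis (Fin N) K E, s = ∑ j, h (b j)} with hSdef
  -- the filtration is decreasing
  have hFmono : ∀ {t t' : ℝ}, t ≤ t' → F t' ≤ F t := by
    intro t t' htt'
    rw [hF t, hF t']
    apply Submodule.span_mono
    intro x hx
    exact le_trans hx (EReal.coe_le_coe_iff.mpr (neg_le_neg htt'))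
  -- membership in the jumping set
  have hmemT : ∀ (j : ℕ) (t : ℝ), j ≤ Module.finrank K (F t) → (t : EReal) ≤ e j := by
    intro j t hj
    rw [he j]
    exact le_sSup ⟨t, rfl, hj⟩
  -- dimension lower bound from an independent family of small vectors
  have hdimF : ∀ (t : ℝ) (m : ℕ) (x : Fin m → E), LinearIndependent K x →
      (∀ i, h (x i) ≤ ((-t : ℝ) : EReal)) → m ≤ Module.finrank K (F t) := by
    intro t m x hli hx
    have hsp : Submodule.span K (Set.range x) ≤ F t := by
      rw [hF t]
      apply Submodule.span_mono
      rintro _ ⟨i, rfl⟩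
      exact hx i
    have h1 : Module.finrank K (Submodule.span K (Set.range x)) = m := by
      rw [finrank_span_eq_card hli, Fintype.card_fin]
    exact h1 ▸ Submodule.finrank_mono hsp
  -- a fixed basis and an upper bound `r0` for its heights
  obtain ⟨r0, hr0⟩ : ∃ r : ℝ, ∀ i, h ((Module.finBasis K E) i) ≤ (r : EReal) := by
    obtain ⟨r, hr⟩ := (Set.finite_range fun i => (h ((Module.finBasis K E) i)).toReal).bddAbove
    refine ⟨r, fun i => ?_⟩
    rcases hcases ((Module.finBasis K E) i) with hb | ⟨s, hs⟩
    · rw [hb]; exact bot_le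
    · have hri := hr (Set.mem_range_self i)
      rw [hs, EReal.toReal_coe] at hri
      rw [hs]
      exact EReal.coe_le_coe_iff.mpr hri
  have hFtop : F (-r0) = ⊤ := by
    rw [hF]
    apply le_antisymm le_top
    rw [← (Module.finBasis K E).span_eq]
    apply Submodule.span_mono
    rintro _ ⟨i, rfl⟩
    show h _ ≤ ((-(-r0) : ℝ) : EReal)
    rw [neg_neg]
    exact hr0 i
  have henb : ∀ j, j ≤ N → e j ≠ ⊥ := by
    intro j hj hbot
    have hle : ((-r0 : ℝ) : EReal) ≤ e j := by
      apply hmemT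
      rw [hFtop, finrank_top]
      exact hNdef ▸ hj
    rw [hbot] at hle
    exact (EReal.bot_lt_coe (-r0)).not_ge hle
  -- key inequality 1: every basis bounds the sum of jumping values from below
  have key1 : ∀ b : Module.Basis (Fin N) K E, -(∑ j, h (b j)) ≤ ∑ j ∈ Finset.Icc 1 N, e j := by
    intro b
    obtain ⟨σ, hmono⟩ : ∃ σ : Equiv.Perm (Fin N), Monotone ((fun i => h (b i)) ∘ σ) :=
      ⟨Tuple.sort _, Tuple.monotone_sort _⟩
    have hstep : ∀ i : Fin N, -(h (b (σ i))) ≤ e (i.1 + 1) := by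
      intro i
      have hcast : (i.1 + 1 : ℕ) ≤ N := i.2
      have hinj : Function.Injective fun k : Fin (i.1 + 1) => σ (Fin.castLE hcast k) :=
        σ.injective.comp (Fin.castLE_injective hcast)
      have hli : LinearIndependent K fun k : Fin (i.1 + 1) => b (σ (Fin.castLE hcast k)) :=
        b.linearIndependent.comp _ hinj
      have hcond : ∀ t : ℝ, h (b (σ i)) ≤ ((-t : ℝ) : EReal) → (t : EReal) ≤ e (i.1 + 1) := by
        intro t ht
        apply hmemT
        apply hdimF t _ _ hli
        intro k
        refine le_trans (hmono ?_) ht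
        show Fin.castLE hcast k ≤ i
        simpa [Fin.le_def] using Nat.lt_succ_iff.mp k.2
      rcases hcases (b (σ i)) with hb | ⟨s, hs⟩
      · rw [hb, EReal.neg_bot]
        refine le_of_eq (ereal_eq_top_of_forall_coe_le fun t => ?_).symm
        exact hcond t (by rw [hb]; exact bot_le)
      · rw [hs, ← EReal.coe_neg]
        exact hcond (-s) (by rw [hs, neg_neg])
    calc -(∑ j, h (b j)) = ∑ i : Fin N, -(h (b (σ i))) := by
            rw [ereal_neg_sum _ _ fun j _ => hhne _,
              ← Equiv.sum_comp σ fun j => -(h (b j))]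
      _ ≤ ∑ i : Fin N, e (i.1 + 1) := Finset.sum_le_sum fun i _ => hstep i
      _ = ∑ j ∈ Finset.Icc 1 N, e j := sum_shift_Icc e N
  have dir1 : -sInf S ≤ ∑ j ∈ Finset.Icc 1 N, e j := by
    rw [EReal.neg_le]
    apply le_sInf
    rintro s ⟨b, rfl⟩
    exact EReal.neg_le.mp (key1 b)
  -- key inequality 2
  have key2 : ∑ j ∈ Finset.Icc 1 N, e j ≤ -sInf S := by
    by_cases htop : ∃ j ∈ Finset.Icc 1 N, e j = ⊤
    · obtain ⟨j0, hj0, hej0⟩ := htop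
      set b0 := Module.finBasis K E with hb0def
      set M := Finset.univ.sup (fun i : Fin N => ∑ k ∈ Finset.univ.erase i, h (b0 k))
        with hMdef
      have hMne : M ≠ ⊤ := by
        refine ne_of_lt ((Finset.sup_lt_iff bot_lt_top).mpr fun i _ => ?_)
        exact lt_top_iff_ne_top.mpr (ereal_sum_ne_top _ _ fun k _ => hhne _)
      have hSle : ∀ t : ℝ, sInf S ≤ ((-t : ℝ) : EReal) + M := by
        intro t
        have hlt : (t : EReal) < e j0 := by rw [hej0]; exact EReal.coe_lt_top t
        rw [he j0] at hlt
        obtain ⟨s, hsmem, hts⟩ := lt_sSup_iff.mp hlt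
        obtain ⟨t', rfl, hdim⟩ := hsmem
        have hj01 : 1 ≤ j0 := (Finset.mem_Icc.mp hj0).1
        have hFne : ¬ ({x : E | h x ≤ ((-t' : ℝ) : EReal)} ⊆ (⊥ : Submodule K E)) := by
          intro hsub
          have hle : F t' ≤ ⊥ := by rw [hF]; exact Submodule.span_le.mpr hsub
          have h0 : Module.finrank K (F t') = 0 := by
            rw [le_bot_iff.mp hle, finrank_bot]
          omega
        obtain ⟨x, hx, hx0⟩ := Set.not_subset.mp hFne
        have hx0' : x ≠ 0 := fun hc => hx0 (by rw [hc]; exact Submodule.zero_mem ⊥)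
        obtain ⟨i, hi⟩ : ∃ i, b0.repr x i ≠ 0 := by
          by_contra hc
          push_neg at hc
          exact hx0' (b0.repr.map_eq_zero_iff.mp (Finsupp.ext hc))
        have hspan : ⊤ ≤ Submodule.span K (Set.range (Function.update ⇑b0 i x)) := by
          rw [← b0.span_eq]
          apply Submodule.span_le.mpr
          rintro _ ⟨k, rfl⟩
          by_cases hk : k = i
          · subst hk
            have hxP : x ∈ Submodule.span K (Set.range (Function.update ⇑b0 k x)) :=
              Submodule.subset_span ⟨k, Function.update_self k x ⇑b0⟩
            have hoP : ∀ m ∈ Finset.univ.erase k,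
                b0.repr x m • b0 m ∈ Submodule.span K (Set.range (Function.update ⇑b0 k x)) := by
              intro m hm
              exact Submodule.smul_mem _ _ (Submodule.subset_span
                ⟨m, Function.update_of_ne (Finset.ne_of_mem_erase hm) x ⇑b0⟩)
            have heq : b0.repr x k • (b0 k : E)
                = x - ∑ m ∈ Finset.univ.erase k, b0.repr x m • b0 m := by
              rw [eq_sub_iff_add_eq,
                Finset.add_sum_erase _ (fun m => b0.repr x m • b0 m) (Finset.mem_univ k)]
              exact b0.sum_repr x
            have hmem : b0.repr x k • (b0 k : E)
                ∈ Submodule.span K (Set.range (Function.update ⇑b0 k x)) := by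
              rw [heq]
              exact Submodule.sub_mem _ hxP (Submodule.sum_mem _ hoP)
            have hfin := Submodule.smul_mem _ (b0.repr x k)⁻¹ hmem
            rwa [smul_smul, inv_mul_cancel₀ hi, one_smul] at hfin
          · exact Submodule.subset_span ⟨k, Function.update_of_ne hk x ⇑b0⟩
        have hcard : Fintype.card (Fin N) = Module.finrank K E := by
          rw [Fintype.card_fin]
        refine le_trans (sInf_le ⟨basisOfTopLeSpanOfCardEqFinrank _ hspan hcard, rfl⟩) ?_
        rw [coe_basisOfTopLeSpanOfCardEqFinrank]
        have hsum : ∑ j : Fin N, h (Function.update ⇑b0 i x j)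
            = h x + ∑ k ∈ Finset.univ.erase i, h (b0 k) := by
          rw [← Finset.add_sum_erase _ (fun j => h (Function.update ⇑b0 i x j))
            (Finset.mem_univ i), Function.update_self]
          congr 1
          refine Finset.sum_congr rfl fun k hk => ?_
          rw [Function.update_of_ne (Finset.ne_of_mem_erase hk)]
        rw [hsum]
        have ht't : ((-t' : ℝ) : EReal) ≤ ((-t : ℝ) : EReal) :=
          EReal.coe_le_coe_iff.mpr (neg_le_neg (le_of_lt (EReal.coe_lt_coe_iff.mp hts)))
        rw [hMdef]
        exact add_le_add (le_trans hx ht't)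
          (Finset.le_sup (f := fun i : Fin N => ∑ k ∈ Finset.univ.erase i, h (b0 k))
            (Finset.mem_univ i))
      have hSbot : sInf S = ⊥ := by
        rcases eq_or_ne M ⊥ with hMb | hMb
        · have h0 := hSle 0
          rw [hMb, EReal.add_bot] at h0
          exact le_bot_iff.mp h0
        · apply ereal_eq_bot_of_forall_le_coe
          intro r
          have h0 := hSle (M.toReal - r)
          have h2 : ((-(M.toReal - r) : ℝ) : EReal) + M = ((r : ℝ) : EReal) := by
            conv_lhs => rw [← EReal.coe_toReal hMne hMb]
            rw [← EReal.coe_add]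
            norm_num
          rwa [h2] at h0
      rw [hSbot]
      exact le_of_le_of_eq le_top EReal.neg_bot.symm
    · push_neg at htop
      have hereal : ∀ j ∈ Finset.Icc 1 N, e j = (((e j).toReal : ℝ) : EReal) := by
        intro j hj
        exact (EReal.coe_toReal (htop j hj) (henb j (Finset.mem_Icc.mp hj).2)).symm
      have hLHS : ∑ j ∈ Finset.Icc 1 N, e j
          = ((∑ j ∈ Finset.Icc 1 N, (e j).toReal : ℝ) : EReal) := by
        rw [ereal_coe_sum]
        exact Finset.sum_congr rfl hereal
      have hkey : ∀ ε : ℝ, 0 < ε →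
          sInf S ≤ ((-(∑ j ∈ Finset.Icc 1 N, (e j).toReal) + N * ε : ℝ) : EReal) := by
        intro ε hε
        have hdim : ∀ n, n < N → n + 1 ≤ Module.finrank K (F ((e (n + 1)).toReal - ε)) := by
          intro n hn
          have hmem : n + 1 ∈ Finset.Icc 1 N := Finset.mem_Icc.mpr ⟨by omega, by omega⟩
          set ρ := (e (n + 1)).toReal with hρ
          have h1 : ((ρ - ε : ℝ) : EReal) < e (n + 1) := by
            conv_rhs => rw [hereal _ hmem, ← hρ]
            exact_mod_cast sub_lt_self _ hε
          rw [he (n + 1)] at h1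
          obtain ⟨s, hsmem, hlt⟩ := lt_sSup_iff.mp h1
          obtain ⟨t', rfl, hd2⟩ := hsmem
          exact le_trans hd2 (Submodule.finrank_mono
            (hFmono (le_of_lt (EReal.coe_lt_coe_iff.mp hlt))))
        have hgreedy : ∀ m : ℕ, m ≤ N → ∃ x : Fin m → E, LinearIndependent K x ∧
            ∀ i : Fin m, h (x i) ≤ ((-((e (i.1 + 1)).toReal - ε) : ℝ) : EReal) := by
          intro m
          induction m with
          | zero => exact fun _ => ⟨Fin.elim0, linearIndependent_empty_type, fun i => i.elim0⟩
          | succ m ih =>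
            intro hm
            obtain ⟨x, hli, hx⟩ := ih (by omega)
            have hd2 : m + 1 ≤ Module.finrank K (F ((e (m + 1)).toReal - ε)) :=
              hdim m (by omega)
            have hnsub : ¬ ({y : E | h y ≤ ((-((e (m + 1)).toReal - ε) : ℝ) : EReal)}
                ⊆ (Submodule.span K (Set.range x) : Set E)) := by
              intro hsub
              have hle : F ((e (m + 1)).toReal - ε) ≤ Submodule.span K (Set.range x) := by
                rw [hF]; exact Submodule.span_le.mpr hsub
              have hc := Submodule.finrank_mono hle
              rw [finrank_span_eq_card hli, Fintype.card_fin] at hc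
              omega
            obtain ⟨y, hy, hyn⟩ := Set.not_subset.mp hnsub
            refine ⟨Fin.snoc x y, linearIndependent_fin_snoc.mpr ⟨hli, hyn⟩, fun i => ?_⟩
            induction i using Fin.lastCases with
            | last =>
              rw [Fin.snoc_last]
              simpa using hy
            | cast k =>
              rw [Fin.snoc_castSucc]
              simpa using hx k
        obtain ⟨x, hli, hx⟩ := hgreedy N le_rfl
        have hsp : ⊤ ≤ Submodule.span K (Set.range x) :=
          (Submodule.eq_top_of_finrank_eq
            (by rw [finrank_span_eq_card hli, Fintype.card_fin])).ge
        have hcard : Fintype.card (Fin N) = Module.finrank K E := by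
          rw [Fintype.card_fin]
        refine le_trans (sInf_le ⟨basisOfTopLeSpanOfCardEqFinrank x hsp hcard, rfl⟩) ?_
        rw [coe_basisOfTopLeSpanOfCardEqFinrank]
        calc ∑ i, h (x i)
            ≤ ∑ i : Fin N, ((-((e (i.1 + 1)).toReal - ε) : ℝ) : EReal) :=
              Finset.sum_le_sum fun i _ => hx i
          _ = ((∑ i : Fin N, (-((e (i.1 + 1)).toReal - ε)) : ℝ) : EReal) :=
              (ereal_coe_sum _ _).symm
          _ = ((-(∑ j ∈ Finset.Icc 1 N, (e j).toReal) + N * ε : ℝ) : EReal) := by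
              have hsplit : ∑ i : Fin N, (-((e (i.1 + 1)).toReal - ε))
                  = -(∑ i : Fin N, (e (i.1 + 1)).toReal) + N * ε := by
                simp only [neg_sub]
                rw [Finset.sum_sub_distrib, Finset.sum_const, Finset.card_univ,
                  Fintype.card_fin, nsmul_eq_mul]
                ring
              rw [hsplit, sum_shift_Icc (fun j => (e j).toReal) N]
      have hfin : sInf S ≤ ((-(∑ j ∈ Finset.Icc 1 N, (e j).toReal) : ℝ) : EReal) := by
        apply ereal_le_coe_of_forall_add
        intro ε' hε'
        refine le_trans (hkey (ε' / (N + 1)) (by positivity)) ?_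
        apply EReal.coe_le_coe_iff.mpr
        have hpos : (0 : ℝ) < (N : ℝ) + 1 := by positivity
        have hb2 : (N : ℝ) * (ε' / ((N : ℝ) + 1)) ≤ ε' := by
          have hcalc : (N : ℝ) * (ε' / ((N : ℝ) + 1)) = ε' * ((N : ℝ) / ((N : ℝ) + 1)) := by
            ring
          rw [hcalc]
          have h1 : (N : ℝ) / ((N : ℝ) + 1) ≤ 1 := by
            rw [div_le_one hpos]; linarith
          calc ε' * ((N : ℝ) / ((N : ℝ) + 1)) ≤ ε' * 1 :=
                mul_le_mul_of_nonneg_left h1 (le_of_lt hε')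
            _ = ε' := mul_one ε'
        push_cast
        linarith
      rw [hLHS]
      refine EReal.le_neg_of_le_neg ?_
      rw [← EReal.coe_neg]
      exact hfin
  exact le_antisymm key2 dir1
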